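/- Let m be a squarefree monomial of degree d with strictly increasing factorization x_{i_1}⋯x_{i_d}, and let τ(m) = x_{i_1} x_{i_2−1}⋯x_{i_d−d+1}. Then for every i, the number of squarefree minimal generators of sfBorel(m) with maximal variable x_i equals the number of minimal generators of Borel(τ(m)) with maximal variable x_{i−d+1}; that is, w_i(sfBorel(m)) = w_{i−d+1}(Borel(τ(m))). -/

import Mathlib

set_option maxHeartbeats 2000000


/-- Minimal generators of `Borel(τ(m))` for `τ(m)` with factorization `J`:
weakly increasing positive sequences bounded termwise by `J`. -/
def borelGens (J : List ℕ) : Set (List ℕ) :=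
  {l | l.length = J.length ∧ l.Chain' (· ≤ ·) ∧
    ∀ t < l.length, 1 ≤ l.getD t 0 ∧ l.getD t 0 ≤ J.getD t 0}

/-- `w J j`: number of generators with maximal variable `x_j`. -/
noncomputable def w (J : List ℕ) (j : ℕ) : ℕ :=
  Set.ncard {l ∈ borelGens J | l.getLast? = some j}

/-- Squarefree minimal generators of `sfBorel(m)` for `m` with strictly
increasing factorization `I`: strictly increasing positive sequences bounded
termwise by `I`. -/
def sfBorelGens (I : List ℕ) : Set (List ℕ) :=
  {l | l.length = I.length ∧ l.Chain' (· < ·) ∧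
    ∀ t < l.length, 1 ≤ l.getD t 0 ∧ l.getD t 0 ≤ I.getD t 0}

/-- `sfw I i`: number of squarefree generators with maximal variable `x_i`. -/
noncomputable def sfw (I : List ℕ) (i : ℕ) : ℕ :=
  Set.ncard {l ∈ sfBorelGens I | l.getLast? = some i}

lemma entries_ge {l : List ℕ} (hc : l.Chain' (· < ·))
    (h1 : ∀ t, (h : t < l.length) → 1 ≤ l[t]) :
    ∀ t, (h : t < l.length) → t + 1 ≤ l[t] := by
  intro t
  induction t with
  | zero => intro h; exact h1 0 h
  | succ n ih =>
    intro h
    have hn : n < l.length := by omega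
    have h2 := List.isChain_iff_getElem.mp hc n (by omega)
    have := ih hn
    omega

lemma getLast?_eq_iff {l : List ℕ} {dd : ℕ} (h : l.length = dd) (h1 : 1 ≤ dd) (x : ℕ) :
    l.getLast? = some x ↔ l[dd-1]'(by omega) = x := by
  subst h
  rw [List.getLast?_eq_getElem?, List.getElem?_eq_getElem (by omega)]
  simp

/-- For a squarefree monomial `m` of degree `d` with factorization
`I = (i_1 < ⋯ < i_d)` and `τ(m) = x_{i_1} x_{i_2-1} ⋯ x_{i_d-d+1}`, we have
`w_i(sfBorel(m)) = w_{i-d+1}(Borel(τ(m)))` for every `i` (both sides vanish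
when `i - d + 1 ≤ 0`; `i + 1 - d` is the truncated subtraction). -/
theorem sf_w_eq_w_tau (I : List ℕ) (hI : I.Chain' (· < ·))
    (hpos : ∀ x ∈ I, 1 ≤ x) (d : ℕ) (hd : I.length = d) (hd1 : 1 ≤ d) (i : ℕ) :
    sfw I i = w (I.mapIdx (fun j a => a - j)) (i + 1 - d) := by
  classical
  set J := I.mapIdx (fun j a => a - j) with hJ
  set f : List ℕ → List ℕ := fun l => l.mapIdx (fun j k => k - j) with hf
  have hJlen : J.length = I.length := List.length_mapIdx
  have hJget : ∀ t, (h : t < I.length) → J[t]'(by omega) = I[t] - t := by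
    intro t h; exact List.getElem_mapIdx
  have hIentry : ∀ t, (h : t < I.length) → t + 1 ≤ I[t] :=
    entries_ge hI (fun t h => hpos _ (I.getElem_mem h))
  set S := {l ∈ sfBorelGens I | l.getLast? = some i} with hS
  set T := {l ∈ borelGens J | l.getLast? = some (i + 1 - d)} with hT
  have hSmem : ∀ l : List ℕ, l ∈ S ↔ l.length = d ∧ l.Chain' (· < ·) ∧
      (∀ t, (h : t < l.length) → 1 ≤ l[t] ∧ l[t] ≤ I.getD t 0) ∧
      l.getLast? = some i := by
    intro l
    constructor
    · rintro ⟨⟨hlen, hc, hb⟩, hlast⟩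
      refine ⟨by omega, hc, ?_, hlast⟩
      intro t h
      have := hb t h
      rw [List.getD_eq_getElem l 0 h] at this
      exact this
    · rintro ⟨hlen, hc, hb, hlast⟩
      refine ⟨⟨by omega, hc, ?_⟩, hlast⟩
      intro t h
      rw [List.getD_eq_getElem l 0 h]
      exact hb t h
  have hTmem : ∀ l : List ℕ, l ∈ T ↔ l.length = d ∧ l.Chain' (· ≤ ·) ∧
      (∀ t, (h : t < l.length) → 1 ≤ l[t] ∧ l[t] ≤ I.getD t 0 - t) ∧
      l.getLast? = some (i + 1 - d) := by
    intro l
    constructor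
    · rintro ⟨⟨hlen, hc, hb⟩, hlast⟩
      refine ⟨by omega, hc, ?_, hlast⟩
      intro t h
      have h2 := hb t h
      rw [List.getD_eq_getElem l 0 h, List.getD_eq_getElem J 0 (by omega)] at h2
      rw [hJget t (by omega)] at h2
      rw [List.getD_eq_getElem I 0 (by omega)]
      exact h2
    · rintro ⟨hlen, hc, hb, hlast⟩
      refine ⟨⟨by omega, hc, ?_⟩, hlast⟩
      intro t h
      have h2 := hb t h
      rw [List.getD_eq_getElem I 0 (by omega)] at h2
      rw [List.getD_eq_getElem l 0 h, List.getD_eq_getElem J 0 (by omega), hJget t (by omega)]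
      exact h2
  have hIgetD : ∀ t, (h : t < I.length) → I.getD t 0 = I[t] := by
    intro t h; exact List.getD_eq_getElem I 0 h
  have hSentry : ∀ l ∈ S, ∀ t, (h : t < l.length) → t + 1 ≤ l[t] := by
    intro l hl
    obtain ⟨hlen, hc, hb, hlast⟩ := (hSmem l).mp hl
    exact entries_ge hc (fun t h => (hb t h).1)
  have key : T = f '' S := by
    ext l'
    constructor
    · intro hl'
      obtain ⟨hlen, hc, hb, hlast⟩ := (hTmem l').mp hl'
      have hlast' : l'[d-1]'(by omega) = i + 1 - d :=
        (getLast?_eq_iff hlen hd1 _).mp hlast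
      have hid : d ≤ i := by
        have := (hb (d-1) (by omega)).1
        omega
      refine ⟨l'.mapIdx (fun j k => k + j), ?_, ?_⟩
      · rw [hSmem]
        have hlen2 : (l'.mapIdx (fun j k => k + j)).length = d := by
          rw [List.length_mapIdx]; omega
        have hget : ∀ t, (h : t < l'.length) →
            (l'.mapIdx (fun j k => k + j))[t]'(by rw [List.length_mapIdx]; omega) = l'[t] + t := by
          intro t h; exact List.getElem_mapIdx
        refine ⟨hlen2, ?_, ?_, ?_⟩
        · refine List.isChain_iff_getElem.mpr ?_
          intro t h
          rw [List.length_mapIdx] at h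
          rw [hget t (by omega), hget (t+1) (by omega)]
          have h2 := List.isChain_iff_getElem.mp hc t (by omega)
          omega
        · intro t h
          rw [hlen2] at h
          rw [hget t (by omega)]
          have h1 := hb t (by omega)
          rw [hIgetD t (by omega)] at h1 ⊢
          have h2 := hIentry t (by omega)
          omega
        · rw [getLast?_eq_iff hlen2 hd1, hget (d-1) (by omega)]
          omega
      · rw [hf]
        apply List.ext_getElem
        · simp [List.length_mapIdx]
        · intro t h1 h2
          simp only [List.length_mapIdx] at h1
          have h3 : (List.mapIdx (fun j k => k - j) (l'.mapIdx (fun j k => k + j)))[t]'(by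
                simpa [List.length_mapIdx] using h1)
              = (l'.mapIdx (fun j k => k + j))[t]'(by rw [List.length_mapIdx]; omega) - t :=
            List.getElem_mapIdx
          rw [h3, List.getElem_mapIdx]
          omega
    · rintro ⟨l, hl, rfl⟩
      obtain ⟨hlen, hc, hb, hlast⟩ := (hSmem l).mp hl
      have hent := hSentry l hl
      have hlast' : l[d-1]'(by omega) = i := (getLast?_eq_iff hlen hd1 _).mp hlast
      have hid : d ≤ i := by
        have := hent (d-1) (by omega)
        omega
      rw [hTmem]
      have hlen2 : (f l).length = d := by rw [hf]; simpa [List.length_mapIdx]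
      have hget : ∀ t, (h : t < l.length) →
          (f l)[t]'(by rw [hf]; simp only [List.length_mapIdx]; omega) = l[t] - t := by
        intro t h; exact List.getElem_mapIdx
      refine ⟨hlen2, ?_, ?_, ?_⟩
      · refine List.isChain_iff_getElem.mpr ?_
        intro t h
        rw [hlen2] at h
        rw [hget t (by omega), hget (t+1) (by omega)]
        have h2 := List.isChain_iff_getElem.mp hc t (by omega)
        have := hent t (by omega)
        omega
      · intro t h
        rw [hlen2] at h
        rw [hget t (by omega)]
        have h1 := hb t (by omega)
        rw [hIgetD t (by omega)] at h1 ⊢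
        have h2 := hent t (by omega)
        omega
      · rw [getLast?_eq_iff hlen2 hd1, hget (d-1) (by omega)]
        omega
  have hinj : Set.InjOn f S := by
    intro l1 h1 l2 h2 heq
    have hlen1 := ((hSmem l1).mp h1).1
    have hlen2 := ((hSmem l2).mp h2).1
    have he1 := hSentry l1 h1
    have he2 := hSentry l2 h2
    apply List.ext_getElem (by omega)
    intro t ht1 ht2
    have h3 := congrArg (fun L : List ℕ => L.getD t 0) heq
    simp only [hf] at h3
    have g1 : (List.mapIdx (fun j k => k - j) l1).getD t 0 = l1[t] - t := by
      rw [List.getD_eq_getElem _ 0 (by simp only [List.length_mapIdx]; omega)]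
      exact List.getElem_mapIdx
    have g2 : (List.mapIdx (fun j k => k - j) l2).getD t 0 = l2[t] - t := by
      rw [List.getD_eq_getElem _ 0 (by simp only [List.length_mapIdx]; omega)]
      exact List.getElem_mapIdx
    rw [g1, g2] at h3
    have := he1 t ht1
    have := he2 t ht2
    omega
  show S.ncard = T.ncard
  rw [key, Set.ncard_image_of_injOn hinj]
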